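/- For κ > 1 and ϖ > 0, if γ_ni = γ_r/((κ−1)γ_r + 1) where γ_r is a nonnegative random variable, then E[log(1 + ϖ·γ_ni)] ≤ log(1 + ϖ/(κ−1)); i.e., the achievable rate under hardware impairments is bounded by a finite capacity ceiling independent of the SNR distribution. -/
import Mathlib


open MeasureTheory

/-- Capacity ceiling under hardware impairments: with γ_ni = γ_r/((κ−1)γ_r + 1),
E[log(1 + ϖ·γ_ni)] ≤ log(1 + ϖ/(κ−1)) for any nonnegative random variable γ_r. -/
theorem stmt5 {Ω : Type*} [MeasurableSpace Ω] (μ : Measure Ω) [IsProbabilityMeasure μ]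
    (γr : Ω → ℝ) (hmeas : Measurable γr) (hnn : ∀ ω, 0 ≤ γr ω)
    (κ ϖ : ℝ) (hκ : 1 < κ) (hϖ : 0 < ϖ) :
    ∫ ω, Real.log (1 + ϖ * (γr ω / ((κ - 1) * γr ω + 1))) ∂μ ≤
      Real.log (1 + ϖ / (κ - 1)) := by
  have hκ' : 0 < κ - 1 := by linarith
  have hC : 0 ≤ Real.log (1 + ϖ / (κ - 1)) := by
    apply Real.log_nonneg
    have : 0 ≤ ϖ / (κ - 1) := by positivity
    linarith
  have hbd : ∀ ω, Real.log (1 + ϖ * (γr ω / ((κ - 1) * γr ω + 1)))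
      ≤ Real.log (1 + ϖ / (κ - 1)) := by
    intro ω
    have hden : 0 < (κ - 1) * γr ω + 1 := by
      have := hnn ω; nlinarith
    have hfrac : γr ω / ((κ - 1) * γr ω + 1) ≤ 1 / (κ - 1) := by
      rw [div_le_div_iff₀ hden hκ']
      nlinarith [hnn ω]
    have hfracnn : 0 ≤ γr ω / ((κ - 1) * γr ω + 1) := by
      have := hnn ω; positivity
    apply Real.log_le_log (by nlinarith)
    have : ϖ * (γr ω / ((κ - 1) * γr ω + 1)) ≤ ϖ * (1 / (κ - 1)) :=
      mul_le_mul_of_nonneg_left hfrac hϖ.le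
    rw [mul_one_div] at this
    linarith
  by_cases hint : Integrable (fun ω => Real.log (1 + ϖ * (γr ω / ((κ - 1) * γr ω + 1)))) μ
  · calc ∫ ω, Real.log (1 + ϖ * (γr ω / ((κ - 1) * γr ω + 1))) ∂μ
        ≤ ∫ _ω, Real.log (1 + ϖ / (κ - 1)) ∂μ :=
          integral_mono hint (integrable_const _) hbd
      _ = Real.log (1 + ϖ / (κ - 1)) := by simp
  · rw [integral_undef hint]; exact hC
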